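/- Let k ≥ 3 and let i ∈ {2, ..., k-1}. Let T = [k] \ {i} ⊂ ℤ, i.e. an interval of length k with one interior point removed. Then for any d ≥ 1 and any point x ∈ (ℤ/kℤ)^d, the set (ℤ/kℤ)^d \ {x} can be partitioned into copies of T, where a copy of T is a translate of the image of T in one coordinate direction (i.e. a set of the form {y + t·e_j : t ∈ T} for some y ∈ (ℤ/kℤ)^d and coordinate direction e_j, with T projected mod k). -/
import Mathlib


/-- A copy of the tile `T ⊆ G` in `G^d`, placed in coordinate direction `j`
and translated by `y`. -/
def IsCopy {G : Type*} [AddCommGroup G] {d : ℕ} (T : Set G)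
    (S : Set (Fin d → G)) : Prop :=
  ∃ (j : Fin d) (y : Fin d → G),
    S = {z | ∃ t ∈ T, z = Function.update y j (y j + t)}

/-- `X ⊆ G^d` is `T`-tilable: it partitions into copies of `T` placed
in the coordinate directions. -/
def Tilable {G : Type*} [AddCommGroup G] {d : ℕ} (T : Set G)
    (X : Set (Fin d → G)) : Prop :=
  ∃ P : Set (Set (Fin d → G)),
    (∀ S ∈ P, IsCopy T S) ∧ P.PairwiseDisjoint id ∧ ⋃₀ P = X

/-- A coordinate line minus one point is a copy of the complement of a point. -/
lemma isCopy_line {G : Type*} [AddCommGroup G] {d : ℕ} (i₀ : G)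
    (j : Fin d) (y : Fin d → G) (c : G) :
    IsCopy {t : G | t ≠ i₀}
      {z : Fin d → G | z j ≠ c ∧ ∀ i', i' ≠ j → z i' = y i'} := by
  refine ⟨j, Function.update y j (c - i₀), ?_⟩
  ext z
  simp only [Set.mem_setOf_eq, Function.update_self]
  constructor
  · rintro ⟨hzj, hz⟩
    refine ⟨z j - (c - i₀), ?_, ?_⟩
    · intro h
      apply hzj
      rw [sub_eq_iff_eq_add] at h
      rw [h]; abel
    · funext i'
      by_cases h : i' = j
      · subst h
        simp only [Function.update_self]
        abel
      · simp [Function.update_of_ne h, hz i' h]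
  · rintro ⟨t, ht, rfl⟩
    constructor
    · simp only [Function.update_self]
      intro h
      apply ht
      have : t = (c - i₀ + t) - (c - i₀) := by abel
      rw [this, h]; abel
    · intro i' hi'
      simp [Function.update_of_ne hi']

theorem coverButOne (k i : ℕ) (hk : 3 ≤ k) (hi₁ : 2 ≤ i) (hi₂ : i ≤ k - 1)
    (d : ℕ) (hd : 1 ≤ d) (x : Fin d → ZMod k) :
    Tilable ((fun n : ℕ => (n : ZMod k)) '' {n : ℕ | 1 ≤ n ∧ n ≤ k ∧ n ≠ i})
      ({x}ᶜ : Set (Fin d → ZMod k)) := by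
  have hkz : NeZero k := ⟨by omega⟩
  have hik : i < k := by omega
  -- the tile's image is the complement of i
  have hT : ((fun n : ℕ => (n : ZMod k)) '' {n : ℕ | 1 ≤ n ∧ n ≤ k ∧ n ≠ i})
      = {t : ZMod k | t ≠ (i : ZMod k)} := by
    ext t
    constructor
    · rintro ⟨n, ⟨h1, h2, h3⟩, rfl⟩
      simp only [Set.mem_setOf_eq]
      intro h
      have hmod : n % k = i % k := (ZMod.natCast_eq_natCast_iff n i k).mp h
      rw [Nat.mod_eq_of_lt hik] at hmod
      rcases eq_or_lt_of_le h2 with h4 | h4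
      · subst h4
        rw [Nat.mod_self] at hmod
        omega
      · rw [Nat.mod_eq_of_lt h4] at hmod
        omega
    · intro ht
      simp only [Set.mem_setOf_eq] at ht
      have hv : ((t.val : ℕ) : ZMod k) = t := ZMod.natCast_val t |>.trans (ZMod.cast_id k t)
      by_cases h0 : t.val = 0
      · refine ⟨k, ⟨by omega, le_refl k, by omega⟩, ?_⟩
        have : t = 0 := by rw [← hv, h0]; simp
        simp [this]
      · refine ⟨t.val, ⟨by omega, le_of_lt (ZMod.val_lt t), ?_⟩, hv⟩
        intro h
        apply ht
        rw [← hv, h]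
  rw [hT]
  classical
  refine ⟨{S | ∃ (j : Fin d) (y : Fin d → ZMod k),
      (∀ i', i' < j → y i' = x i') ∧
      S = {z : Fin d → ZMod k | z j ≠ x j ∧ ∀ i', i' ≠ j → z i' = y i'}}, ?_, ?_, ?_⟩
  · rintro S ⟨j, y, -, rfl⟩
    exact isCopy_line (i : ZMod k) j y (x j)
  · rintro S ⟨j, y, hy, rfl⟩ S' ⟨j', y', hy', rfl⟩ hss
    rw [Function.onFun, id, id, Set.disjoint_left]
    intro z hz hz'
    obtain ⟨hzj, hzy⟩ := hz
    obtain ⟨hzj', hzy'⟩ := hz'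
    exfalso
    apply hss
    rcases lt_trichotomy j j' with h | h | h
    · exact absurd ((hzy' j h.ne).trans (hy' j h)) hzj
    · subst h
      have key : ∀ i', i' ≠ j → y i' = y' i' :=
        fun i' h' => ((hzy i' h').symm).trans (hzy' i' h')
      ext w
      simp only [Set.mem_setOf_eq]
      constructor
      · rintro ⟨a, b⟩
        exact ⟨a, fun i' hi => (b i' hi).trans (key i' hi)⟩
      · rintro ⟨a, b⟩
        exact ⟨a, fun i' hi => (b i' hi).trans (key i' hi).symm⟩
    · exact absurd ((hzy j' h.ne).trans (hy j' h)) hzj'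
  · ext z
    simp only [Set.mem_sUnion, Set.mem_setOf_eq, Set.mem_compl_iff,
      Set.mem_singleton_iff]
    constructor
    · rintro ⟨S, ⟨j, y, -, rfl⟩, hzj, -⟩
      intro h
      subst h
      exact hzj rfl
    · intro hz
      obtain ⟨j0, hj0⟩ := Function.ne_iff.mp hz
      have hFne : (Finset.univ.filter (fun j => z j ≠ x j)).Nonempty :=
        ⟨j0, by simp [hj0]⟩
      set j := (Finset.univ.filter (fun j => z j ≠ x j)).min' hFne with hjdef
      have hjmem : z j ≠ x j := by
        have := Finset.min'_mem _ hFne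
        simpa using this
      refine ⟨_, ⟨j, z, ?_, rfl⟩, hjmem, fun _ _ => rfl⟩
      intro i' hi'
      by_contra h
      have : i' ∈ Finset.univ.filter (fun j => z j ≠ x j) := by simp [h]
      exact absurd (Finset.min'_le _ _ this) (not_le.mpr hi')
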